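/- Let n ≥ 2, let f ∈ L¹(σ) and let ω ∈ S^{n-1}. If ∫_{S^{n-1}} exp(-i r ⟪ω, η⟫) f(η) dσ(η) = 0 for every real r > 0, then for every bounded continuous function h : ℝ → ℂ one has ∫_{S^{n-1}} h(⟪ω, η⟫) f(η) dσ(η) = 0. -/

import Mathlib

open MeasureTheory

/-- The surface measure on the unit sphere `S^{n-1}` in `ℝⁿ`. -/
noncomputable def sphereMeasure (n : ℕ) : Measure (EuclideanSpace ℝ (Fin n)) :=
  (μH[(n : ℝ) - 1]).restrict (Metric.sphere (0 : EuclideanSpace ℝ (Fin n)) 1)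

/-- Abstract version: if `φ` is a.e. bounded by `1`, `f` is integrable, and the
"Fourier transform" `r ↦ ∫ exp(-i r φ) f` vanishes for all `r > 0`, then
`∫ h(φ) f = 0` for every continuous `h`. -/
theorem aux_vanish {α : Type*} [MeasurableSpace α] (μ : Measure α)
    (f : α → ℂ) (hf : Integrable f μ)
    (φ : α → ℝ) (hφm : AEStronglyMeasurable φ μ) (hb : ∀ᵐ η ∂μ, |φ η| ≤ 1)
    (hvanish : ∀ r : ℝ, 0 < r →
      ∫ η, Complex.exp (-Complex.I * r * (φ η : ℂ)) * f η ∂μ = 0)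
    (h : ℝ → ℂ) (hc : Continuous h) :
    ∫ η, h (φ η) * f η ∂μ = 0 := by
  -- integrability of g(φ η) * f η for continuous g
  have key_int : ∀ g : ℝ → ℂ, Continuous g →
      Integrable (fun η => g (φ η) * f η) μ := by
    intro g hg
    obtain ⟨M, hM⟩ := isCompact_Icc.exists_bound_of_continuousOn
      (s := Set.Icc (-1 : ℝ) 1) hg.continuousOn
    refine (hf.norm.const_mul M).mono'
      ((hg.comp_aestronglyMeasurable hφm).mul hf.1) ?_
    filter_upwards [hb] with η hη
    rw [norm_mul]
    have : ‖g (φ η)‖ ≤ M := hM _ (Set.mem_Icc.2 ⟨(abs_le.1 hη).1, (abs_le.1 hη).2⟩)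
    exact mul_le_mul_of_nonneg_right this (norm_nonneg _)
  -- the family of integrands
  set Fk : ℕ → ℂ → α → ℂ :=
    fun k z η => ((φ η : ℂ)) ^ k * Complex.exp (-Complex.I * z * (φ η : ℂ)) * f η
    with hFkdef
  have meas : ∀ k (z : ℂ), AEStronglyMeasurable (Fk k z) μ := by
    intro k z
    have hcont : Continuous fun c : ℝ =>
        ((c : ℂ)) ^ k * Complex.exp (-Complex.I * z * (c : ℂ)) := by fun_prop
    exact (hcont.comp_aestronglyMeasurable hφm).mul hf.1
  have hre_calc : ∀ (z : ℂ) (c : ℝ), (-Complex.I * z * (c : ℂ)).re = z.im * c := by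
    intro z c
    simp [Complex.mul_re]
  have bound_pt : ∀ k (z : ℂ) η, |φ η| ≤ 1 →
      ‖Fk k z η‖ ≤ Real.exp ‖z‖ * ‖f η‖ := by
    intro k z η hη
    rw [hFkdef]
    simp only [norm_mul]
    have h1 : ‖((φ η : ℂ)) ^ k‖ ≤ 1 := by
      rw [norm_pow, Complex.norm_real, Real.norm_eq_abs]
      exact pow_le_one₀ (abs_nonneg _) hη
    have h2 : ‖Complex.exp (-Complex.I * z * (φ η : ℂ))‖ ≤ Real.exp ‖z‖ := by
      rw [Complex.norm_exp, hre_calc]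
      apply Real.exp_le_exp.2
      calc z.im * φ η ≤ |z.im * φ η| := le_abs_self _
        _ = |z.im| * |φ η| := abs_mul _ _
        _ ≤ ‖z‖ * 1 := mul_le_mul (Complex.abs_im_le_norm z) hη (abs_nonneg _) (norm_nonneg _)
        _ = ‖z‖ := mul_one _
    calc ‖((φ η : ℂ)) ^ k‖ * ‖Complex.exp (-Complex.I * z * (φ η : ℂ))‖ * ‖f η‖
        ≤ 1 * Real.exp ‖z‖ * ‖f η‖ := by gcongr
      _ = Real.exp ‖z‖ * ‖f η‖ := by rw [one_mul]
  have int_Fk : ∀ k (z : ℂ), Integrable (Fk k z) μ := by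
    intro k z
    refine (hf.norm.const_mul (Real.exp ‖z‖)).mono' (meas k z) ?_
    filter_upwards [hb] with η hη using bound_pt k z η hη
  set G : ℕ → ℂ → ℂ := fun k z => ∫ η, Fk k z η ∂μ with hGdef
  -- differentiation under the integral sign
  have hderiv : ∀ k (z₀ : ℂ),
      HasDerivAt (G k) (∫ η, -Complex.I * Fk (k + 1) z₀ η ∂μ) z₀ := by
    intro k z₀
    have := hasDerivAt_integral_of_dominated_loc_of_deriv_le (μ := μ)
      (F := fun z η => Fk k z η) (F' := fun z η => -Complex.I * Fk (k + 1) z η)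
      (x₀ := z₀) (bound := fun η => Real.exp (‖z₀‖ + 1) * ‖f η‖) (Metric.ball_mem_nhds z₀ one_pos)
      (Filter.Eventually.of_forall fun z => meas k z) (int_Fk k z₀)
      ((meas (k + 1) z₀).const_mul _) ?_ (hf.norm.const_mul _) ?_
    · exact this.2
    · filter_upwards [hb] with η hη z hz
      rw [norm_mul]
      have h1 : ‖-Complex.I‖ = 1 := by simp
      rw [h1, one_mul]
      refine (bound_pt (k + 1) z η hη).trans ?_
      have : ‖z‖ ≤ ‖z₀‖ + 1 := by
        calc ‖z‖ = ‖z₀ + (z - z₀)‖ := by ring_nf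
          _ ≤ ‖z₀‖ + ‖z - z₀‖ := norm_add_le _ _
          _ ≤ ‖z₀‖ + 1 := by
              have := Metric.mem_ball.1 hz
              rw [dist_eq_norm] at this
              linarith
      exact mul_le_mul_of_nonneg_right (Real.exp_le_exp.2 this) (norm_nonneg _)
    · refine Filter.Eventually.of_forall fun η z _ => ?_
      set c : ℂ := (φ η : ℂ)
      have h1 : HasDerivAt (fun z : ℂ => -Complex.I * z * c) (-Complex.I * c) z := by
        simpa using ((hasDerivAt_id z).const_mul (-Complex.I)).mul_const c
      have h2 := h1.cexp
      have h3 := (h2.const_mul (c ^ k)).mul_const (f η)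
      refine h3.congr_deriv ?_
      rw [hFkdef]
      ring
  have hGdiff : ∀ k, Differentiable ℂ (G k) := fun k z => (hderiv k z).differentiableAt
  -- G 0 vanishes identically, by the identity theorem
  have hG0 : ∀ z, G 0 z = 0 := by
    have hana : AnalyticOnNhd ℂ (G 0) Set.univ :=
      Complex.analyticOnNhd_univ_iff_differentiable.2 (hGdiff 0)
    have hzero : ∀ k : ℕ, G 0 (((1 + 1 / ((k : ℝ) + 1)) : ℝ) : ℂ) = 0 := by
      intro k
      have hr : (0 : ℝ) < 1 + 1 / ((k : ℝ) + 1) := by positivity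
      have := hvanish _ hr
      rw [hGdef]
      simp only [hFkdef, pow_zero, one_mul]
      exact this
    have htend : Filter.Tendsto (fun k : ℕ => (((1 + 1 / ((k : ℝ) + 1)) : ℝ) : ℂ))
        Filter.atTop (nhdsWithin 1 {(1 : ℂ)}ᶜ) := by
      apply tendsto_nhdsWithin_of_tendsto_nhds_of_eventually_within
      · have t1 : Filter.Tendsto (fun k : ℕ => 1 + 1 / ((k : ℝ) + 1))
            Filter.atTop (nhds 1) := by
          simpa using (tendsto_const_nhds : Filter.Tendsto (fun _ : ℕ => (1:ℝ)) Filter.atTop (nhds 1)).add tendsto_one_div_add_atTop_nhds_zero_nat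
        have := (Complex.continuous_ofReal.tendsto 1).comp t1
        simpa [Function.comp_def] using this
      · refine Filter.Eventually.of_forall fun k => ?_
        simp only [Set.mem_compl_iff, Set.mem_singleton_iff]
        intro hcontra
        have : (1 + 1 / ((k : ℝ) + 1)) = 1 := by exact_mod_cast hcontra
        have h1 : (0 : ℝ) < 1 / ((k : ℝ) + 1) := by positivity
        linarith
    have hfreq : ∃ᶠ z in nhdsWithin 1 {(1 : ℂ)}ᶜ, G 0 z = 0 :=
      htend.frequently ((Filter.Eventually.of_forall hzero).frequently)
    intro z
    exact hana.eqOn_zero_of_preconnected_of_frequently_eq_zero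
      isPreconnected_univ (Set.mem_univ 1) hfreq (Set.mem_univ z)
  -- all G k vanish identically
  have hGk : ∀ k z, G k z = 0 := by
    intro k
    induction k with
    | zero => exact hG0
    | succ k ih =>
      intro z
      have h1 := hderiv k z
      have h2 : HasDerivAt (G k) 0 z := by
        have : G k = fun _ => (0 : ℂ) := funext ih
        rw [this]
        exact hasDerivAt_const z 0
      have h3 : (∫ η, -Complex.I * Fk (k + 1) z η ∂μ) = 0 := h1.unique h2
      rw [integral_const_mul] at h3
      rcases mul_eq_zero.1 h3 with h' | h'
      · exact absurd h' (by simp [Complex.I_ne_zero])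
      · exact h'
  -- moments vanish
  have hmom : ∀ k : ℕ, ∫ η, ((φ η : ℂ)) ^ k * f η ∂μ = 0 := by
    intro k
    have := hGk k 0
    rw [hGdef] at this
    simpa [hFkdef, Complex.exp_zero] using this
  -- polynomial integrals vanish
  have hpoly : ∀ p : Polynomial ℝ, ∫ η, ((p.eval (φ η) : ℝ) : ℂ) * f η ∂μ = 0 := by
    intro p
    induction p using Polynomial.induction_on' with
    | add p q hp hq =>
      have ip : Integrable (fun η => ((p.eval (φ η) : ℝ) : ℂ) * f η) μ :=
        key_int (fun t => ((p.eval t : ℝ) : ℂ)) (Complex.continuous_ofReal.comp p.continuous)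
      have iq : Integrable (fun η => ((q.eval (φ η) : ℝ) : ℂ) * f η) μ :=
        key_int (fun t => ((q.eval t : ℝ) : ℂ)) (Complex.continuous_ofReal.comp q.continuous)
      simp only [Polynomial.eval_add, Complex.ofReal_add, add_mul]
      rw [integral_add ip iq, hp, hq, add_zero]
    | monomial k a =>
      simp only [Polynomial.eval_monomial, Complex.ofReal_mul, Complex.ofReal_pow, mul_assoc]
      rw [integral_const_mul, hmom k, mul_zero]
  -- real continuous functions
  have hreal : ∀ g : ℝ → ℝ, Continuous g →
      ∫ η, ((g (φ η) : ℝ) : ℂ) * f η ∂μ = 0 := by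
    intro g hg
    set X := ∫ η, ((g (φ η) : ℝ) : ℂ) * f η ∂μ with hXdef
    set C := ∫ η, ‖f η‖ ∂μ with hCdef
    have hC0 : 0 ≤ C := integral_nonneg fun η => norm_nonneg _
    have key : ∀ ε : ℝ, 0 < ε → ‖X‖ ≤ ε * C := by
      intro ε hε
      obtain ⟨p, hp⟩ := exists_polynomial_near_of_continuousOn (-1) 1 g
        hg.continuousOn ε hε
      have hgint : Integrable (fun η => ((g (φ η) : ℝ) : ℂ) * f η) μ :=
        key_int (fun t => ((g t : ℝ) : ℂ)) (Complex.continuous_ofReal.comp hg)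
      have hpint : Integrable (fun η => ((p.eval (φ η) : ℝ) : ℂ) * f η) μ :=
        key_int (fun t => ((p.eval t : ℝ) : ℂ)) (Complex.continuous_ofReal.comp p.continuous)
      have hX : X = ∫ η, (((g (φ η) - p.eval (φ η) : ℝ)) : ℂ) * f η ∂μ := by
        simp only [Complex.ofReal_sub, sub_mul]
        rw [integral_sub hgint hpint, hpoly p, sub_zero]
      rw [hX]
      calc ‖∫ η, (((g (φ η) - p.eval (φ η) : ℝ)) : ℂ) * f η ∂μ‖
          ≤ ∫ η, ‖(((g (φ η) - p.eval (φ η) : ℝ)) : ℂ) * f η‖ ∂μ :=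
            norm_integral_le_integral_norm _
        _ ≤ ∫ η, ε * ‖f η‖ ∂μ := by
            refine integral_mono_ae ?_ (hf.norm.const_mul ε) ?_
            · exact (hgint.sub hpint).norm.congr
                (Filter.Eventually.of_forall fun η => by
                  simp [Complex.ofReal_sub, sub_mul])
            · filter_upwards [hb] with η hη
              rw [norm_mul, Complex.norm_real, Real.norm_eq_abs]
              have hmem : φ η ∈ Set.Icc (-1 : ℝ) 1 :=
                Set.mem_Icc.2 ⟨(abs_le.1 hη).1, (abs_le.1 hη).2⟩
              have : |g (φ η) - p.eval (φ η)| ≤ ε := by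
                rw [abs_sub_comm]
                exact (hp _ hmem).le
              exact mul_le_mul_of_nonneg_right this (norm_nonneg _)
        _ = ε * C := integral_const_mul ε _
    have hle : ‖X‖ ≤ 0 := by
      refine le_of_forall_pos_le_add fun ε hε => ?_
      have hε' : 0 < ε / (C + 1) := by positivity
      calc ‖X‖ ≤ ε / (C + 1) * C := key _ hε'
        _ ≤ ε := by
          rw [div_mul_eq_mul_div, div_le_iff₀ (by linarith)]
          nlinarith
        _ = 0 + ε := (zero_add ε).symm
    simpa using norm_le_zero_iff.1 hle
  -- split h into real and imaginary parts
  have hsplit : (fun η => h (φ η) * f η) =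
      fun η => (((h (φ η)).re : ℝ) : ℂ) * f η +
        Complex.I * ((((h (φ η)).im : ℝ) : ℂ) * f η) := by
    funext η
    conv_lhs => rw [← Complex.re_add_im (h (φ η))]
    ring
  have hre : Continuous fun t => (h t).re := Complex.continuous_re.comp hc
  have him : Continuous fun t => (h t).im := Complex.continuous_im.comp hc
  have i1 : Integrable (fun η => (((h (φ η)).re : ℝ) : ℂ) * f η) μ :=
    key_int (fun t => (((h t).re : ℝ) : ℂ)) (Complex.continuous_ofReal.comp hre)
  have i2 : Integrable (fun η => Complex.I * ((((h (φ η)).im : ℝ) : ℂ) * f η)) μ :=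
    (key_int (fun t => (((h t).im : ℝ) : ℂ)) (Complex.continuous_ofReal.comp him)).const_mul _
  calc ∫ η, h (φ η) * f η ∂μ
      = ∫ η, ((((h (φ η)).re : ℝ) : ℂ) * f η +
          Complex.I * ((((h (φ η)).im : ℝ) : ℂ) * f η)) ∂μ := by rw [hsplit]
    _ = (∫ η, (((h (φ η)).re : ℝ) : ℂ) * f η ∂μ) +
          ∫ η, Complex.I * ((((h (φ η)).im : ℝ) : ℂ) * f η) ∂μ := integral_add i1 i2
    _ = 0 := by
        rw [integral_const_mul, hreal _ hre, hreal _ him, mul_zero, add_zero]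

/-- If the Fourier transform of `f dσ` vanishes along the open ray through `ω ∈ S^{n-1}`,
then `∫ h(⟪ω,η⟫) f(η) dσ(η) = 0` for every bounded continuous `h : ℝ → ℂ`. -/
theorem integral_vanish_of_ray_vanish (n : ℕ) (hn : 2 ≤ n)
    (f : EuclideanSpace ℝ (Fin n) → ℂ) (hf : Integrable f (sphereMeasure n))
    (ω : EuclideanSpace ℝ (Fin n)) (hω : ‖ω‖ = 1)
    (hvanish : ∀ r : ℝ, 0 < r →
      ∫ η, Complex.exp (-Complex.I * r * ((inner ℝ ω η : ℝ) : ℂ)) * f η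
        ∂(sphereMeasure n) = 0) :
    ∀ h : ℝ → ℂ, Continuous h → (∃ M : ℝ, ∀ t : ℝ, ‖h t‖ ≤ M) →
      ∫ η, h ((inner ℝ ω η : ℝ)) * f η ∂(sphereMeasure n) = 0 := by
  intro h hc _
  have hφc : Continuous fun η : EuclideanSpace ℝ (Fin n) => (inner ℝ ω η : ℝ) :=
    continuous_const.inner continuous_id
  have hb : ∀ᵐ η ∂(sphereMeasure n), |(inner ℝ ω η : ℝ)| ≤ 1 := by
    rw [sphereMeasure]
    filter_upwards [ae_restrict_mem Metric.isClosed_sphere.measurableSet] with η hη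
    have hη1 : ‖η‖ = 1 := by simpa [mem_sphere_zero_iff_norm] using hη
    calc |(inner ℝ ω η : ℝ)| ≤ ‖ω‖ * ‖η‖ := abs_real_inner_le_norm ω η
      _ = 1 := by rw [hω, hη1, one_mul]
  exact aux_vanish (sphereMeasure n) f hf
    (fun η => (inner ℝ ω η : ℝ)) hφc.aestronglyMeasurable hb hvanish h hc
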